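/- Let x, y be sequences of the same length over a q-ary alphabet with d_L(x,y) ≥ 4, and write x = a r b, y = a' s b' where a ≠ a' and b ≠ b'. Then for any symbol a'' not in {a, a'}, no element of I_2(x) ∩ I_2(y) begins with a''; symmetrically, for any b'' not in {b, b'}, no element of I_2(x) ∩ I_2(y) ends with b''. -/

import Mathlib

/-- The t-insertion ball: length-(|x|+t) supersequences of x. -/
def iBall {α : Type*} (t : ℕ) (x : List α) : Set (List α) :=
  {z | x.Sublist z ∧ z.length = x.length + t}

lemma key_aux {q : ℕ} (c d e : Fin q) (l m z' : List (Fin q))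
    (hc : e ≠ c) (hd : e ≠ d)
    (h1 : (c :: l).Sublist (e :: z')) (h2 : (d :: m).Sublist (e :: z'))
    (hlen1 : z'.length = (c :: l).length + 1) (hlen2 : z'.length = (d :: m).length + 1)
    (hdist : iBall 1 (c :: l) ∩ iBall 1 (d :: m) = ∅) : False := by
  have h1' : (c :: l).Sublist z' := by
    cases h1 with
    | cons _ h => exact h
    | cons_cons _ h => exact absurd rfl hc
  have h2' : (d :: m).Sublist z' := by
    cases h2 with
    | cons _ h => exact h
    | cons_cons _ h => exact absurd rfl hd
  have : z' ∈ iBall 1 (c :: l) ∩ iBall 1 (d :: m) := ⟨⟨h1', hlen1⟩, ⟨h2', hlen2⟩⟩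
  rw [hdist] at this
  exact this

theorem stmt_11 (q n : ℕ) (a a' b b' : Fin q) (r s : List (Fin q))
    (ha : a ≠ a') (hb : b ≠ b')
    (x y : List (Fin q))
    (hx : x = a :: r ++ [b]) (hy : y = a' :: s ++ [b'])
    (hxn : x.length = n) (hyn : y.length = n)
    (hdist : iBall 1 x ∩ iBall 1 y = ∅) :
    ∀ z ∈ iBall 2 x ∩ iBall 2 y,
      (∀ a'' : Fin q, a'' ≠ a → a'' ≠ a' → z.head? ≠ some a'') ∧
      (∀ b'' : Fin q, b'' ≠ b → b'' ≠ b' → z.getLast? ≠ some b'') := by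
  rw [List.cons_append] at hx hy
  rintro z ⟨⟨hzx, hzlx⟩, ⟨hzy, hzly⟩⟩
  constructor
  · intro a'' h1 h2 hhead
    cases z with
    | nil => simp at hhead
    | cons w z' =>
      have hw : w = a'' := by simpa using hhead
      subst hw
      apply key_aux a a' w (r ++ [b]) (s ++ [b']) z' h1 h2
      · rw [← hx]; exact hzx
      · rw [← hy]; exact hzy
      · have := hzlx; rw [hx] at this; simp at this ⊢; omega
      · have := hzly; rw [hy] at this; simp at this ⊢; omega
      · rw [← hx, ← hy]; exact hdist
  · intro b'' h1 h2 hlast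
    have hhead : z.reverse.head? = some b'' := by
      rw [List.head?_reverse]; exact hlast
    have hxr : x.reverse = b :: (r.reverse ++ [a]) := by
      rw [hx]; simp
    have hyr : y.reverse = b' :: (s.reverse ++ [a']) := by
      rw [hy]; simp
    cases hzr : z.reverse with
    | nil => rw [hzr] at hhead; simp at hhead
    | cons w z' =>
      have hw : w = b'' := by rw [hzr] at hhead; simpa using hhead
      subst hw
      have hdist' : iBall 1 x.reverse ∩ iBall 1 y.reverse = ∅ := by
        ext w
        simp only [Set.mem_inter_iff, Set.mem_empty_iff_false, iff_false, not_and]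
        rintro ⟨hw1, hw2⟩ ⟨hw3, hw4⟩
        have : w.reverse ∈ iBall 1 x ∩ iBall 1 y := by
          refine ⟨⟨?_, by simpa using hw2⟩, ⟨?_, by simpa using hw4⟩⟩
          · simpa using hw1.reverse
          · simpa using hw3.reverse
        rw [hdist] at this
        exact this
      rw [hxr] at hdist'
      rw [hyr] at hdist'
      apply key_aux b b' w (r.reverse ++ [a]) (s.reverse ++ [a']) z' h1 h2 _ _ _ _ hdist'
      · rw [← hxr, ← hzr]; exact hzx.reverse
      · rw [← hyr, ← hzr]; exact hzy.reverse
      · have hlz : z.length = z'.length + 1 := by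
          have := congrArg List.length hzr; simpa using this
        rw [hx] at hzlx; simp at hzlx ⊢; omega
      · have hlz : z.length = z'.length + 1 := by
          have := congrArg List.length hzr; simpa using this
        rw [hy] at hzly; simp at hzly ⊢; omega
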